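/- arXiv:2411.05467 — 3 statements merged into one kernel-verified Lean document; each statement's English description precedes it below -/
import Mathlib

section
/- Consider a commutative square of functors with p : A₀ → A₁ and q : B₀ → B₁ localization functors, f₀ : A₀ → B₀ and f₁ : A₁ → B₁ admitting right adjoints f₀^R and f₁^R. If there exists some natural isomorphism p ∘ f₀^R ≅ f₁^R ∘ q, then the Beck–Chevalley (mate) transformation p ∘ f₀^R → f₁^R ∘ q associated to the commuting square is itself an isomorphism. -/
open CategoryTheory

/-- Given a commutative square `e : f₀ ⋙ q ≅ p ⋙ f₁` with `p, q` Dwyer-Kan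
localizations and `f₀ ⊣ g₀`, `f₁ ⊣ g₁`, if there exists some isomorphism
`g₀ ⋙ p ≅ q ⋙ g₁`, then the Beck-Chevalley (mate) transformation
`p ∘ g₀ ⟶ g₁ ∘ q` is an isomorphism. -/
theorem beck_chevalley_of_exists_iso
    {A₀ A₁ B₀ B₁ : Type*} [Category A₀] [Category A₁] [Category B₀] [Category B₁]
    (p : A₀ ⥤ A₁) (q : B₀ ⥤ B₁)
    (Wp : MorphismProperty A₀) (Wq : MorphismProperty B₀)
    [p.IsLocalization Wp] [q.IsLocalization Wq]
    (f₀ : A₀ ⥤ B₀) (f₁ : A₁ ⥤ B₁) (g₀ : B₀ ⥤ A₀) (g₁ : B₁ ⥤ A₁)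
    (adj₀ : f₀ ⊣ g₀) (adj₁ : f₁ ⊣ g₁)
    (e : f₀ ⋙ q ≅ p ⋙ f₁)
    (h : Nonempty (g₀ ⋙ p ≅ q ⋙ g₁)) :
    ∀ b : B₀, IsIso (adj₁.unit.app (p.obj (g₀.obj b)) ≫
      g₁.map (e.inv.app (g₀.obj b)) ≫ g₁.map (q.map (adj₀.counit.app b))) := by
  obtain ⟨h⟩ := h
  have hinv : Wq.IsInvertedBy (g₀ ⋙ p) := by
    intro X Y w hw
    have : IsIso (q.map w) := Localization.inverts q Wq w hw
    have heq : (g₀ ⋙ p).map w = h.hom.app X ≫ g₁.map (q.map w) ≫ h.inv.app Y := by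
      have := h.hom.naturality w
      dsimp at this ⊢
      rw [← Category.assoc, ← this]
      simp
    rw [heq]
    infer_instance
  letI : CatCommSq f₀ p q f₁ := ⟨e⟩
  let F' : B₁ ⥤ A₁ := Localization.lift (g₀ ⋙ p) hinv q
  let t : g₀ ⋙ p ≅ q ⋙ F' := (Localization.fac (g₀ ⋙ p) hinv q).symm
  letI : CatCommSq g₀ q p F' := ⟨t⟩
  let adj' : f₁ ⊣ F' := adj₀.localization p Wp q Wq f₁ F'
  intro b
  have h1 : (adj'.rightAdjointUniq adj₁).hom.app (q.obj b) =
      adj₁.unit.app (F'.obj (q.obj b)) ≫ g₁.map (adj'.counit.app (q.obj b)) := by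
    have := Adjunction.homEquiv_symm_rightAdjointUniq_hom_app adj' adj₁ (q.obj b)
    rw [← (adj₁.homEquiv _ _).apply_symm_apply
      ((adj'.rightAdjointUniq adj₁).hom.app (q.obj b)), this, Adjunction.homEquiv_unit]
  have h2 : adj'.counit.app (q.obj b) =
      f₁.map (t.inv.app b) ≫ e.inv.app (g₀.obj b) ≫ q.map (adj₀.counit.app b) :=
    adj₀.localization_counit_app p Wp q Wq f₁ F' b
  have key : adj₁.unit.app (p.obj (g₀.obj b)) ≫ g₁.map (e.inv.app (g₀.obj b)) ≫
      g₁.map (q.map (adj₀.counit.app b)) =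
      t.hom.app b ≫ (adj'.rightAdjointUniq adj₁).hom.app (q.obj b) := by
    rw [h1, h2]
    have hnat := adj₁.unit.naturality (t.hom.app b)
    dsimp at hnat
    conv_rhs => rw [← Category.assoc, hnat, Category.assoc, ← Functor.map_comp,
      ← Functor.map_comp_assoc, Iso.hom_inv_id_app]
    simp
  rw [key]
  infer_instance
end

section
/- If the unit object of D is κ-compact for a regular cardinal κ, then every D-atomic object of any D-module M is κ-compact in M. -/
open CategoryTheory CategoryTheory.MonoidalCategory CategoryTheory.Limits

universe v u

variable {D : Type u} [Category.{v} D] [MonoidalCategory D]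

/-- The projection map `d ⊗ hom_M(m, m') ⟶ hom_M(m, d ⊗ m')` for a `D`-module
category `M` with internal homs `homM` right adjoint to the action functors. -/
noncomputable def projHom {M : Type u} [Category.{v} M]
    (actM : D ⥤ M ⥤ M)
    (assocM : ∀ (d d' : D) (m : M),
      (actM.obj (d ⊗ d')).obj m ≅ (actM.obj d).obj ((actM.obj d').obj m))
    (homM : M → (M ⥤ D)) (adjM : ∀ m : M, actM.flip.obj m ⊣ homM m)
    (m : M) (d : D) (m' : M) :
    d ⊗ (homM m).obj m' ⟶ (homM m).obj ((actM.obj d).obj m') :=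
  ((adjM m).homEquiv _ _)
    ((assocM d ((homM m).obj m') m).hom ≫ (actM.obj d).map ((adjM m).counit.app m'))

/-- An object `m` of a `D`-module category `M` is `D`-atomic if `hom_M(m, −)`
preserves colimits and all projection maps are isomorphisms. -/
def IsAtomicObj {M : Type u} [Category.{v} M]
    (actM : D ⥤ M ⥤ M)
    (assocM : ∀ (d d' : D) (m : M),
      (actM.obj (d ⊗ d')).obj m ≅ (actM.obj d).obj ((actM.obj d').obj m))
    (homM : M → (M ⥤ D)) (adjM : ∀ m : M, actM.flip.obj m ⊣ homM m)
    (m : M) : Prop :=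
  Nonempty (PreservesColimits (homM m)) ∧
    ∀ (d : D) (m' : M), IsIso (projHom actM assocM homM adjM m d m')

/-- A category `J` is `κ`-filtered if every diagram with fewer than `κ` arrows
admits a cocone. -/
def IsCardFiltered (J : Type v) [SmallCategory J] (κ : Cardinal.{v}) : Prop :=
  ∀ (K : Type v) [SmallCategory K],
    Cardinal.mk ((a : K) × (b : K) × (a ⟶ b)) < κ →
      ∀ F : K ⥤ J, Nonempty (Limits.Cocone F)

/-- An object `x` is `κ`-compact if `Hom(x, −)` preserves colimits of `κ`-filtered
shape. -/
def IsKappaCompactObj {C : Type u} [Category.{v} C] (κ : Cardinal.{v}) (x : C) : Prop :=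
  ∀ (J : Type v) [SmallCategory J], IsCardFiltered J κ →
    Nonempty (PreservesColimitsOfShape J (coyoneda.obj (Opposite.op x)))

/-- If the unit object of `D` is `κ`-compact for a regular cardinal `κ`, then every
`D`-atomic object of a `D`-module category `M` is `κ`-compact in `M`. -/
theorem atomic_implies_kappaCompact
    {M : Type u} [Category.{v} M]
    (actM : D ⥤ M ⥤ M)
    (assocM : ∀ (d d' : D) (m : M),
      (actM.obj (d ⊗ d')).obj m ≅ (actM.obj d).obj ((actM.obj d').obj m))
    (unitM : ∀ m : M, (actM.obj (𝟙_ D)).obj m ≅ m)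
    (homM : M → (M ⥤ D)) (adjM : ∀ m : M, actM.flip.obj m ⊣ homM m)
    (κ : Cardinal.{v}) (hκ : κ.IsRegular)
    (hunit : IsKappaCompactObj κ (𝟙_ D))
    (m : M) (hm : IsAtomicObj actM assocM homM adjM m) :
    IsKappaCompactObj κ m := by
  intro J _ hJ
  obtain ⟨⟨hpres⟩, -⟩ := hm
  obtain ⟨hunitJ⟩ := hunit J hJ
  have e : homM m ⋙ coyoneda.obj (Opposite.op (𝟙_ D)) ≅ coyoneda.obj (Opposite.op m) :=
    NatIso.ofComponents
      (fun m' => Equiv.toIso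
        (((adjM m).homEquiv (𝟙_ D) m').symm.trans
          (Iso.homCongr (unitM m) (Iso.refl m'))))
      (by
        intro m' m'' f
        ext g
        simp only [Functor.comp_obj, Equiv.toIso_hom, Functor.comp_map,
          types_comp_apply, Equiv.trans_apply]
        dsimp
        simp only [Equiv.toIso_hom_hom_apply, Equiv.trans_apply]
        rw [Adjunction.homEquiv_naturality_right_symm]
        simp)
  haveI : PreservesColimitsOfShape J (homM m ⋙ coyoneda.obj (Opposite.op (𝟙_ D))) :=
    comp_preservesColimitsOfShape _ _
  exact ⟨preservesColimitsOfShape_of_natIso e⟩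
end

section
/- Let C be compactly generated by dualizable objects and K a set of compact objects. Every dualizable K-torsion object of C is K-complete, and is moreover dualizable in the category C^{K-cpl} of K-complete objects (with its symmetric monoidal structure induced by the completion functor Λ). -/
open CategoryTheory CategoryTheory.MonoidalCategory CategoryTheory.Limits

universe v u

/-- An object is compact if mapping out of it commutes with filtered colimits. -/
def IsCompactObj {C : Type u} [Category.{v} C] (x : C) : Prop :=
  ∀ (J : Type v) [SmallCategory J] [IsFiltered J],
    Nonempty (PreservesColimitsOfShape J (coyoneda.obj (Opposite.op x)))

/-- An object of a monoidal category is dualizable if it is part of an exact pairing. -/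
def IsDualizableObj {C : Type u} [Category.{v} C] [MonoidalCategory C] (x : C) : Prop :=
  ∃ y : C, Nonempty (ExactPairing x y)

/-- A class of objects is closed under colimits. -/
def ColimClosed {C : Type u} [Category.{v} C] (P : Set C) : Prop :=
  ∀ (J : Type v) [SmallCategory J] (F : J ⥤ C) (c : Cocone F),
    IsColimit c → (∀ j, F.obj j ∈ P) → c.pt ∈ P

/-- The localizing tensor ideal generated by `K`: the smallest class containing `K`
closed under colimits and tensoring with arbitrary objects. -/
def TorsionSet {C : Type u} [Category.{v} C] [MonoidalCategory C] (K : Set C) : Set C :=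
  {x | ∀ P : Set C, ColimClosed P → (∀ d y : C, y ∈ P → (d ⊗ y) ∈ P) → K ⊆ P → x ∈ P}

/-- The `K`-local objects: right orthogonal to the `K`-torsion objects. -/
def LocalSet {C : Type u} [Category.{v} C] [MonoidalCategory C] [HasZeroMorphisms C]
    (K : Set C) : Set C :=
  {x | ∀ t ∈ TorsionSet K, ∀ g : t ⟶ x, g = 0}

/-- The `K`-complete objects: right orthogonal to the `K`-local objects. -/
def CompleteSet {C : Type u} [Category.{v} C] [MonoidalCategory C] [HasZeroMorphisms C]
    (K : Set C) : Set C :=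
  {x | ∀ l ∈ LocalSet K, ∀ g : l ⟶ x, g = 0}


section auxiliaries

open CategoryTheory.Functor.LaxMonoidal CategoryTheory.Functor.OplaxMonoidal

/-- A strong monoidal functor sends an exact pairing to an exact pairing. -/
noncomputable def Functor.mapExactPairingAux {C D : Type*} [Category C] [Category D]
    [MonoidalCategory C] [MonoidalCategory D]
    (F : C ⥤ D) [F.Monoidal] (X Y : C) [ExactPairing X Y] :
    ExactPairing (F.obj X) (F.obj Y) where
  coevaluation' := ε F ≫ F.map (η_ X Y) ≫ δ F X Y
  evaluation' := μ F Y X ≫ F.map (ε_ X Y) ≫ η F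
  coevaluation_evaluation' := by
    have H := F.congr_map (ExactPairing.coevaluation_evaluation (X := X) (Y := Y))
    simp only [F.map_comp, Functor.Monoidal.map_whiskerLeft, Functor.Monoidal.map_whiskerRight,
      Functor.Monoidal.map_associator_inv, Functor.Monoidal.map_rightUnitor,
      Functor.Monoidal.map_leftUnitor_inv, Category.assoc,
      Functor.Monoidal.whiskerLeft_μ_δ_assoc, Functor.Monoidal.whiskerRight_μ_δ_assoc,
      Functor.Monoidal.μ_δ_assoc] at H
    have H2 := (cancel_epi (δ F Y (𝟙_ C))).1 H
    simp only [← Category.assoc] at H2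
    have H3 := (cancel_mono (μ F (𝟙_ C) Y)).1 H2
    simp only [Category.assoc] at H3
    simp only [MonoidalCategory.whiskerLeft_comp, comp_whiskerRight, Category.assoc]
    rw [reassoc_of% H3]
    simp [Functor.Monoidal.whiskerLeft_ε_η_assoc, Functor.Monoidal.whiskerRight_ε_η]
  evaluation_coevaluation' := by
    have H := F.congr_map (ExactPairing.evaluation_coevaluation (X := X) (Y := Y))
    simp only [F.map_comp, Functor.Monoidal.map_whiskerLeft, Functor.Monoidal.map_whiskerRight,
      Functor.Monoidal.map_associator, Functor.Monoidal.map_leftUnitor,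
      Functor.Monoidal.map_rightUnitor_inv, Category.assoc,
      Functor.Monoidal.whiskerLeft_μ_δ_assoc, Functor.Monoidal.whiskerRight_μ_δ_assoc,
      Functor.Monoidal.μ_δ_assoc] at H
    have H2 := (cancel_epi (δ F (𝟙_ C) X)).1 H
    simp only [← Category.assoc] at H2
    have H3 := (cancel_mono (μ F X (𝟙_ C))).1 H2
    simp only [Category.assoc] at H3
    simp only [MonoidalCategory.whiskerLeft_comp, comp_whiskerRight, Category.assoc]
    rw [reassoc_of% H3]
    simp [Functor.Monoidal.whiskerRight_ε_η_assoc, Functor.Monoidal.whiskerLeft_ε_η]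

/-- Classes of objects closed under colimits are closed under isomorphisms. -/
lemma ColimClosed.of_iso_aux {C : Type u} [Category.{v} C] {P : Set C} (hP : ColimClosed P)
    {a b : C} (e : a ≅ b) (ha : a ∈ P) : b ∈ P := by
  refine hP (Discrete PUnit.{v+1}) ((Functor.const _).obj a)
    ⟨b, ⟨fun _ => e.hom, by intros; simp⟩⟩
    ⟨fun s => e.inv ≫ s.ι.app ⟨PUnit.unit⟩, ?_, ?_⟩ (fun _ => ha)
  · rintro s ⟨⟨⟩⟩
    simp
  · intro s m hm
    simpa using (e.inv ≫= hm ⟨PUnit.unit⟩)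

end auxiliaries

/-- Let `C` be compactly generated by dualizable objects and `K` a set of compact
objects. Every dualizable `K`-torsion object of `C` is `K`-complete, and is moreover
dualizable in the category of `K`-complete objects with its symmetric monoidal
structure induced by the completion functor `Λ`. -/
theorem dualizable_torsion_is_complete_and_dualizable
    {C : Type u} [Category.{v} C] [MonoidalCategory C] [SymmetricCategory C]
    [HasZeroMorphisms C]
    (hgen : ∃ G : Set C, (∀ g ∈ G, IsCompactObj g ∧ IsDualizableObj g) ∧
      ∀ (x : C) (P : Set C), ColimClosed P → G ⊆ P → x ∈ P)
    (K : Set C) (hK : ∀ k ∈ K, IsCompactObj k)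
    [MonoidalCategory (ObjectProperty.FullSubcategory (fun y : C => y ∈ CompleteSet K))]
    (Λ : C ⥤ ObjectProperty.FullSubcategory (fun y : C => y ∈ CompleteSet K)) [Λ.Monoidal]
    (adjΛ : Λ ⊣ ObjectProperty.ι (fun y : C => y ∈ CompleteSet K))
    (x : C) (hxd : IsDualizableObj x) (hxt : x ∈ TorsionSet K) :
    ∃ hx : x ∈ CompleteSet K,
      IsDualizableObj (C := ObjectProperty.FullSubcategory (fun y : C => y ∈ CompleteSet K)) ⟨x, hx⟩ := by
  obtain ⟨y, ⟨p⟩⟩ := hxd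
  haveI : ExactPairing y x := BraidedCategory.exactPairing_swap x y
  have hT_tensor : ∀ (d : C) {t : C}, t ∈ TorsionSet K → (d ⊗ t) ∈ TorsionSet K :=
    fun d t ht P hP hI hK' => hI d t (ht P hP hI hK')
  have hT_iso : ∀ {a b : C}, (a ≅ b) → a ∈ TorsionSet K → b ∈ TorsionSet K :=
    fun e ha P hP hI hK' => ColimClosed.of_iso_aux hP e (ha P hP hI hK')
  have htor : ∀ d : C, (x ⊗ d) ∈ TorsionSet K :=
    fun d => hT_iso (β_ d x) (hT_tensor d hxt)
  have hx : x ∈ CompleteSet K := by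
    intro l hl g
    have hm_local : ∀ (t : C), t ∈ TorsionSet K → ∀ h : t ⟶ x ⊗ (y ⊗ l), h = 0 := by
      intro t ht h
      have hz : ∀ k : x ⊗ (y ⊗ t) ⟶ l, k = 0 := fun k => hl _ (htor (y ⊗ t)) k
      let e1 := tensorLeftHomEquiv t x y (y ⊗ l)
      let e2 := tensorLeftHomEquiv (y ⊗ t) y x l
      calc h = e1 (e2 (e2.symm (e1.symm h))) := by simp
      _ = e1 (e2 (e2.symm (e1.symm 0))) := by
        rw [hz (e2.symm (e1.symm h)), hz (e2.symm (e1.symm 0))]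
      _ = 0 := by simp
    have hid : 𝟙 (x ⊗ (y ⊗ l)) = 0 := hm_local _ (htor (y ⊗ l)) _
    have hfact : (λ_ l).inv ≫ η_ x y ▷ l ≫ (α_ x y l).hom ≫ x ◁ (y ◁ g) ≫
        x ◁ ε_ x y ≫ (ρ_ x).hom = g := by
      rw [← associator_naturality_right_assoc, ← whisker_exchange_assoc,
        ← leftUnitor_inv_naturality_assoc, ExactPairing.evaluation_coevaluation_assoc]
      simp
    have hzero : x ◁ (y ◁ g) = 0 := by
      rw [← Category.id_comp (x ◁ (y ◁ g)), hid, zero_comp]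
    rw [← hfact, hzero]
    simp
  refine ⟨hx, ?_⟩
  haveI : ExactPairing (Λ.obj x) (Λ.obj y) := Functor.mapExactPairingAux Λ x y
  have hiso : IsIso (adjΛ.counit.app ⟨x, hx⟩) := inferInstance
  let e : (⟨x, hx⟩ : ObjectProperty.FullSubcategory (fun y : C => y ∈ CompleteSet K)) ≅ Λ.obj x :=
    (asIso (adjΛ.counit.app ⟨x, hx⟩)).symm
  exact ⟨Λ.obj y, ⟨exactPairingCongrLeft e⟩⟩
end
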